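/- Let L > 0, κ_m > 0, κ_C > 0, κ_a ≥ 1, A > 0 and B ≥ 0 be real numbers with A ≤ 2 κ_m L B. Then ((−(2+κ_C)·√(κ_a A) + √((2+κ_C)²·κ_a A + 2 L B))/L)² ≥ A/(κ_m L·((2+κ_C)·√κ_a + √((2+κ_C)²·κ_a + 1/κ_m)))². -/

import Mathlib

/-- The elementary real inequality used in Lemma 3.4 of the paper
(inequality (3.25)), with A = σ_k‖g_k‖ and B = ‖g_{k+1}‖. -/
theorem decrease_conversion_inequality
    (L κm κC κa A B : ℝ) (hL : 0 < L) (hκm : 0 < κm) (hκC : 0 < κC) (hκa : 1 ≤ κa)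
    (hA : 0 < A) (hB : 0 ≤ B) (hAB : A ≤ 2 * κm * L * B) :
    ((-(2 + κC) * Real.sqrt (κa * A)
        + Real.sqrt ((2 + κC) ^ 2 * (κa * A) + 2 * L * B)) / L) ^ 2
      ≥ A / (κm * L * ((2 + κC) * Real.sqrt κa
          + Real.sqrt ((2 + κC) ^ 2 * κa + 1 / κm))) ^ 2 := by
  set c := 2 + κC with hc
  have hc0 : 0 < c := by simp only [hc]; linarith
  have hκa0 : (0:ℝ) ≤ κa := by linarith
  set s := Real.sqrt κa with hs
  have hs0 : 0 < s := Real.sqrt_pos.2 (by linarith)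
  have hs2 : s ^ 2 = κa := Real.sq_sqrt hκa0
  set E := Real.sqrt (c ^ 2 * κa + 1 / κm) with hE
  have hE2 : E ^ 2 = c ^ 2 * κa + 1 / κm := Real.sq_sqrt (by positivity)
  have hE0 : 0 < E := Real.sqrt_pos.2 (by positivity)
  have hEm : κm * E ^ 2 = κm * (c ^ 2 * κa) + 1 := by
    rw [hE2]; field_simp
  set D := c * s + E with hD
  have hD0 : 0 < D := by positivity
  set a := Real.sqrt A with ha
  have ha0 : 0 < a := Real.sqrt_pos.2 hA
  have ha2 : a ^ 2 = A := Real.sq_sqrt hA.le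
  have hkey : κm * D ^ 2 = 2 * c * s * κm * D + 1 := by
    simp only [hD]
    linear_combination hEm - κm * c ^ 2 * hs2
  have hsa : Real.sqrt (κa * A) = s * a := Real.sqrt_mul hκa0 A
  have h1 : 2 * (c * s * a) * (a / (κm * D)) + (a / (κm * D)) ^ 2 = a ^ 2 / κm := by
    have hκm' := hκm.ne'
    have hD' := hD0.ne'
    field_simp
    linear_combination (-1 : ℝ) * hkey
  have h2 : a ^ 2 / κm ≤ 2 * L * B := by
    rw [div_le_iff₀ hκm]
    linarith [ha2, hAB]
  have hexp : (c * s * a + a / (κm * D)) ^ 2 = c ^ 2 * (κa * A) + (2 * (c * s * a) * (a / (κm * D)) + (a / (κm * D)) ^ 2) := by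
    linear_combination c ^ 2 * a ^ 2 * hs2 + c ^ 2 * κa * ha2
  have hT : (c * s * a + a / (κm * D)) ^ 2 ≤ c ^ 2 * (κa * A) + 2 * L * B := by
    rw [hexp, h1]
    linarith [h2]
  have hpos : 0 ≤ c * s * a + a / (κm * D) := by
    have h5 : 0 ≤ a / (κm * D) := (div_pos ha0 (mul_pos hκm hD0)).le
    have h6 : 0 ≤ c * s * a := by positivity
    exact add_nonneg h6 h5
  have hsqrtT : c * s * a + a / (κm * D) ≤ Real.sqrt (c ^ 2 * (κa * A) + 2 * L * B) := by
    have h7 := Real.sqrt_le_sqrt hT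
    rwa [Real.sqrt_sq hpos] at h7
  have hmain : a / (κm * L * D) ≤ (-c * (s * a) + Real.sqrt (c ^ 2 * (κa * A) + 2 * L * B)) / L := by
    have h3 : a / (κm * D) ≤ -c * (s * a) + Real.sqrt (c ^ 2 * (κa * A) + 2 * L * B) := by
      linarith [hsqrtT]
    have heq : a / (κm * L * D) = (a / (κm * D)) / L := by
      rw [div_div]
      congr 1
      ring
    rw [heq]
    gcongr
  rw [hsa, ge_iff_le, show A / (κm * L * D) ^ 2 = (a / (κm * L * D)) ^ 2 by rw [div_pow, ha2]]
  exact pow_le_pow_left₀ (by positivity) hmain 2
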